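/- (Theorem 1) For a bounded sequence x ∈ ℓ^∞(X), the spectrum σ(x) is empty — that is, the holomorphic function g(λ) = R(λ, S̄)x̄, defined for |λ| ≠ 1, extends to an entire function ℂ → Y — if and only if lim_{n→∞} x_n = 0 in X. -/

import Mathlib

set_option linter.unusedSectionVars false

open Filter Topology
open scoped ENNReal

noncomputable section

variable (X : Type*) [NormedAddCommGroup X] [NormedSpace ℂ X] [CompleteSpace X]

/-- `ℓ^∞(X)`: the Banach space of bounded sequences in `X` with the sup norm. -/
abbrev Linf : Type _ := ↥(lp (fun _ : ℕ => X) ∞)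

/-- `c₀(X)`: the subspace of `ℓ^∞(X)` of sequences converging to `0`. -/
def czero : Submodule ℂ (Linf X) where
  carrier := {f | Tendsto (fun n => f n) atTop (𝓝 (0 : X))}
  add_mem' := by
    intro f g hf hg
    simpa [lp.coeFn_add] using hf.add hg
  zero_mem' := by
    simp [lp.coeFn_zero]
  smul_mem' := by
    intro c f hf
    simpa [lp.coeFn_smul] using hf.const_smul c

instance : IsClosed ((czero X : Set (Linf X))) := by
  rw [← isSeqClosed_iff_isClosed]
  intro F f hF hFf
  show Tendsto (fun n => f n) atTop (𝓝 (0 : X))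
  rw [Metric.tendsto_atTop]
  intro ε hε
  obtain ⟨k, hk⟩ := (Metric.tendsto_atTop.mp hFf (ε / 2) (by linarith)).imp
    (fun k h => h k le_rfl)
  have hFk : Tendsto (fun n => (F k) n) atTop (𝓝 (0 : X)) := hF k
  obtain ⟨N, hN⟩ := Metric.tendsto_atTop.mp hFk (ε / 2) (by linarith)
  refine ⟨N, fun n hn => ?_⟩
  have h1 : ‖f n - (F k) n‖ ≤ ‖f - F k‖ := by
    have := lp.norm_apply_le_norm (ENNReal.top_ne_zero) (f - F k) n
    simpa [lp.coeFn_sub] using this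
  have h2 : ‖f - F k‖ < ε / 2 := by
    rw [← dist_eq_norm] at *
    rw [dist_comm]
    exact hk
  have h3 : ‖(F k) n‖ < ε / 2 := by simpa [dist_eq_norm] using hN n hn
  have : ‖f n‖ ≤ ‖f n - (F k) n‖ + ‖(F k) n‖ := by
    calc ‖f n‖ = ‖(f n - (F k) n) + (F k) n‖ := by rw [sub_add_cancel]
      _ ≤ ‖f n - (F k) n‖ + ‖(F k) n‖ := norm_add_le _ _
  · simp only [dist_eq_norm, sub_zero]
    calc ‖f n‖ ≤ ‖f n - (F k) n‖ + ‖(F k) n‖ := this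
      _ < ε / 2 + ε / 2 := by exact add_lt_add (lt_of_le_of_lt h1 h2) h3
      _ = ε := by ring

/-- The quotient space `Y = ℓ^∞(X)/c₀(X)`. -/
abbrev YY := (Linf X) ⧸ (czero X)

/-- The shift, as a map of bounded sequences. -/
def shiftFun (f : Linf X) : Linf X :=
  ⟨fun n => f (n + 1), memℓp_infty ⟨‖f‖, by
    rintro r ⟨n, rfl⟩
    exact lp.norm_apply_le_norm ENNReal.top_ne_zero f (n + 1)⟩⟩

@[simp] lemma shiftFun_apply (f : Linf X) (n : ℕ) : (shiftFun X f) n = f (n + 1) := rfl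

/-- The shift operator `S` on `ℓ^∞(X)`, `(Sx)ₙ = x_{n+1}`. -/
def shiftL : Linf X →L[ℂ] Linf X :=
  LinearMap.mkContinuous
    { toFun := shiftFun X
      map_add' := fun _ _ => rfl
      map_smul' := fun _ _ => rfl }
    1
    (fun f => by
      simp only [one_mul, LinearMap.coe_mk, AddHom.coe_mk]
      exact lp.norm_le_of_forall_le (norm_nonneg f)
        (fun n => lp.norm_apply_le_norm ENNReal.top_ne_zero f (n + 1)))

@[simp] lemma shiftL_apply (f : Linf X) (n : ℕ) : (shiftL X f) n = f (n + 1) := rfl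

lemma shift_mem_czero {f : Linf X} (hf : f ∈ czero X) : shiftL X f ∈ czero X := by
  have : Tendsto (fun n => f (n + 1)) atTop (𝓝 (0 : X)) :=
    hf.comp (tendsto_add_atTop_nat 1)
  show Tendsto (fun n => (shiftL X f) n) atTop (𝓝 (0 : X))
  simpa using this

/-- The reduced shift operator `S̄` on `Y = ℓ^∞(X)/c₀(X)`, as a linear map. -/
def SbarLin : YY X →ₗ[ℂ] YY X :=
  Submodule.liftQ (czero X) ((czero X).mkQ.comp (shiftL X).toLinearMap)
    (by
      intro f hf
      simp only [LinearMap.mem_ker, LinearMap.comp_apply, Submodule.mkQ_apply,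
        ContinuousLinearMap.coe_coe, Submodule.Quotient.mk_eq_zero]
      exact shift_mem_czero X hf)

lemma SbarLin_mk (f : Linf X) :
    SbarLin X (Submodule.Quotient.mk f) = Submodule.Quotient.mk (shiftL X f) := rfl

/-- The reduced shift operator `S̄` on `Y = ℓ^∞(X)/c₀(X)`. -/
def Sbar : YY X →L[ℂ] YY X :=
  (SbarLin X).mkContinuous 1 (by
    intro y
    rw [one_mul]
    refine le_of_forall_pos_le_add (fun ε hε => ?_)
    obtain ⟨m, rfl, hm⟩ := Submodule.Quotient.norm_mk_lt y hε
    rw [SbarLin_mk]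
    calc ‖(Submodule.Quotient.mk (shiftL X m) : YY X)‖ ≤ ‖shiftL X m‖ :=
          Submodule.Quotient.norm_mk_le _ _
      _ ≤ ‖m‖ := lp.norm_le_of_forall_le (norm_nonneg m)
            (fun n => lp.norm_apply_le_norm ENNReal.top_ne_zero m (n + 1))
      _ ≤ ‖(Submodule.Quotient.mk m : YY X)‖ + ε := hm.le)

lemma Sbar_mk (f : Linf X) :
    Sbar X (Submodule.Quotient.mk f) = Submodule.Quotient.mk (shiftL X f) := rfl

/-- The function `g(λ) = R(λ, S̄) x̄ = (λ - S̄)⁻¹ x̄`. -/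
def gfun (x : Linf X) (z : ℂ) : YY X :=
  (resolvent (Sbar X) z) (Submodule.Quotient.mk x)

/-- The spectrum `σ(x)` of a bounded sequence `x`: the set of points `z₀ ∈ ℂ` such that the
holomorphic function `g(λ) = R(λ, S̄) x̄` (defined for `|λ| ≠ 1`) admits no holomorphic extension
to a neighborhood of `z₀`. -/
def seqSpectrum (x : Linf X) : Set ℂ :=
  {z₀ : ℂ | ¬ ∃ (U : Set ℂ) (h : ℂ → YY X), IsOpen U ∧ z₀ ∈ U ∧ AnalyticOnNhd ℂ h U ∧
      ∀ z ∈ U, ‖z‖ ≠ 1 → h z = gfun X x z}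


/-! ### Auxiliary development -/

/-- The backward shift, prepending `0`. -/
def backFun (f : Linf X) : Linf X :=
  ⟨fun n => Nat.rec 0 (fun m _ => f m) n, memℓp_infty ⟨‖f‖, by
    rintro r ⟨n, rfl⟩
    cases n with
    | zero => simpa using norm_nonneg f
    | succ m => exact lp.norm_apply_le_norm ENNReal.top_ne_zero f m⟩⟩

@[simp] lemma backFun_apply_zero (f : Linf X) : (backFun X f) 0 = 0 := rfl
@[simp] lemma backFun_apply_succ (f : Linf X) (n : ℕ) : (backFun X f) (n + 1) = f n := rfl

/-- The backward shift as a continuous linear map. -/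
def backL : Linf X →L[ℂ] Linf X :=
  LinearMap.mkContinuous
    { toFun := backFun X
      map_add' := fun f g => by
        apply lp.ext; funext n
        cases n with
        | zero => simp [lp.coeFn_add]
        | succ m => simp [lp.coeFn_add]
      map_smul' := fun c f => by
        apply lp.ext; funext n
        cases n with
        | zero => simp [lp.coeFn_smul]
        | succ m => simp [lp.coeFn_smul] }
    1
    (fun f => by
      simp only [one_mul, LinearMap.coe_mk, AddHom.coe_mk]
      refine lp.norm_le_of_forall_le (norm_nonneg f) (fun n => ?_)
      cases n with
      | zero => simpa using norm_nonneg f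
      | succ m => exact lp.norm_apply_le_norm ENNReal.top_ne_zero f m)

@[simp] lemma backL_apply_zero (f : Linf X) : (backL X f) 0 = 0 := rfl
@[simp] lemma backL_apply_succ (f : Linf X) (n : ℕ) : (backL X f) (n + 1) = f n := rfl

lemma backL_norm_le : ‖backL X‖ ≤ 1 :=
  LinearMap.mkContinuous_norm_le _ zero_le_one _

lemma back_mem_czero {f : Linf X} (hf : f ∈ czero X) : backL X f ∈ czero X := by
  have : Tendsto (fun n => (backL X f) n) atTop (𝓝 (0 : X)) := by
    rw [← tendsto_add_atTop_iff_nat 1]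
    simp only [backL_apply_succ]
    exact hf
  exact this

/-- The reduced backward shift on `Y`. -/
def Tbar : YY X →L[ℂ] YY X :=
  ((Submodule.liftQ (czero X) ((czero X).mkQ.comp (backL X).toLinearMap)
    (by
      intro f hf
      simp only [LinearMap.mem_ker, LinearMap.comp_apply, Submodule.mkQ_apply,
        ContinuousLinearMap.coe_coe, Submodule.Quotient.mk_eq_zero]
      exact back_mem_czero X hf))).mkContinuous 1 (by
    intro y
    rw [one_mul]
    refine le_of_forall_pos_le_add (fun ε hε => ?_)
    obtain ⟨m, rfl, hm⟩ := Submodule.Quotient.norm_mk_lt y hε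
    calc ‖(Submodule.Quotient.mk (backL X m) : YY X)‖ ≤ ‖backL X m‖ :=
          Submodule.Quotient.norm_mk_le _ _
      _ ≤ ‖m‖ := by
          calc ‖backL X m‖ ≤ ‖backL X‖ * ‖m‖ := (backL X).le_opNorm m
            _ ≤ 1 * ‖m‖ := by
                exact mul_le_mul_of_nonneg_right (backL_norm_le X) (norm_nonneg m)
            _ = ‖m‖ := one_mul _
      _ ≤ ‖(Submodule.Quotient.mk m : YY X)‖ + ε := hm.le)

lemma Tbar_mk (f : Linf X) :
    Tbar X (Submodule.Quotient.mk f) = Submodule.Quotient.mk (backL X f) := rfl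

lemma Tbar_norm_le : ‖Tbar X‖ ≤ 1 :=
  LinearMap.mkContinuous_norm_le _ zero_le_one _

lemma Sbar_norm_le : ‖Sbar X‖ ≤ 1 :=
  LinearMap.mkContinuous_norm_le _ zero_le_one _

lemma Sbar_mul_Tbar : Sbar X * Tbar X = 1 := by
  ext y
  induction y using Submodule.Quotient.induction_on with
  | _ f =>
    rw [ContinuousLinearMap.mul_apply, Tbar_mk, Sbar_mk]
    congr 1

lemma Tbar_mul_Sbar : Tbar X * Sbar X = 1 := by
  ext y
  induction y using Submodule.Quotient.induction_on with
  | _ f =>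
    rw [ContinuousLinearMap.mul_apply, Sbar_mk, Tbar_mk, ContinuousLinearMap.one_apply]
    rw [Submodule.Quotient.eq]
    show Tendsto (fun n => (backL X (shiftL X f) - f) n) atTop (𝓝 (0 : X))
    have hev : ∀ n : ℕ, 1 ≤ n → (backL X (shiftL X f) - f) n = 0 := by
      intro n hn
      obtain ⟨m, rfl⟩ := Nat.exists_eq_add_of_le hn
      have : (backL X (shiftL X f) - f) (1 + m) = backL X (shiftL X f) (1 + m) - f (1 + m) := by
        simp [lp.coeFn_sub]
      rw [this, add_comm 1 m]
      simp
    exact tendsto_atTop_of_eventually_const hev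

lemma isUnit_Sbar : IsUnit (Sbar X : YY X →L[ℂ] YY X) :=
  ⟨⟨Sbar X, Tbar X, Sbar_mul_Tbar X, Tbar_mul_Sbar X⟩, rfl⟩

set_option maxHeartbeats 1000000 in
lemma mem_resolventSet_of_norm_ne_one {z : ℂ} (hz : ‖z‖ ≠ 1) :
    z ∈ resolventSet ℂ (Sbar X : YY X →L[ℂ] YY X) := by
  rcases lt_or_gt_of_ne hz with h | h
  · -- ‖z‖ < 1 : use invertibility of the shift
    show IsUnit (algebraMap ℂ (YY X →L[ℂ] YY X) z - Sbar X)
    have h1 : IsUnit ((1 : YY X →L[ℂ] YY X) - z • Tbar X) := by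
      apply isUnit_one_sub_of_norm_lt_one (x := z • Tbar X)
      calc ‖z • Tbar X‖ ≤ ‖z‖ * ‖Tbar X‖ := ContinuousLinearMap.opNorm_smul_le z (Tbar X)
        _ ≤ ‖z‖ * 1 := mul_le_mul_of_nonneg_left (Tbar_norm_le X) (norm_nonneg z)
        _ < 1 := by simpa using h
    have key : algebraMap ℂ (YY X →L[ℂ] YY X) z - Sbar X
        = (-(1 - z • Tbar X)) * Sbar X := by
      simp only [neg_mul, sub_mul, smul_mul_assoc, Tbar_mul_Sbar, one_mul, neg_sub,
        Algebra.algebraMap_eq_smul_one]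
      congr 1
      calc z • (1 : YY X →L[ℂ] YY X) = z • (Tbar X * Sbar X) := by rw [Tbar_mul_Sbar]
        _ = z • Tbar X * Sbar X := by ext y; rfl
    rw [key]
    exact IsUnit.mul h1.neg (isUnit_Sbar X)
  · -- ‖z‖ > 1
    show IsUnit (algebraMap ℂ (YY X →L[ℂ] YY X) z - Sbar X)
    have hz0 : (z : ℂ) ≠ 0 := by
      intro h0; rw [h0] at h; simp at h; linarith
    have h1 : IsUnit ((1 : YY X →L[ℂ] YY X) - z⁻¹ • Sbar X) := by
      apply isUnit_one_sub_of_norm_lt_one (x := z⁻¹ • Sbar X)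
      calc ‖z⁻¹ • Sbar X‖ ≤ ‖z⁻¹‖ * ‖Sbar X‖ := ContinuousLinearMap.opNorm_smul_le z⁻¹ (Sbar X)
        _ ≤ ‖z⁻¹‖ * 1 := mul_le_mul_of_nonneg_left (Sbar_norm_le X) (norm_nonneg _)
        _ = ‖z‖⁻¹ := by rw [mul_one, norm_inv]
        _ < 1 := by
            rw [inv_lt_one_iff₀]; right; exact h
    have h2 : IsUnit (algebraMap ℂ (YY X →L[ℂ] YY X) z) :=
      (isUnit_iff_ne_zero.mpr hz0).map (algebraMap ℂ (YY X →L[ℂ] YY X))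
    have key : algebraMap ℂ (YY X →L[ℂ] YY X) z - Sbar X
        = (algebraMap ℂ (YY X →L[ℂ] YY X) z) * ((1 : YY X →L[ℂ] YY X) - z⁻¹ • Sbar X) := by
      rw [mul_sub, mul_one, Algebra.algebraMap_eq_smul_one, smul_mul_assoc, one_mul,
        smul_smul, mul_inv_cancel₀ hz0, one_smul]
    rw [key]
    exact h2.mul h1

set_option maxHeartbeats 1000000 in
lemma gfun_differentiableAt {z : ℂ} (hz : ‖z‖ ≠ 1) (x : Linf X) :
    DifferentiableAt ℂ (gfun X x) z := by
  have h0 : HasDerivAt (resolvent (Sbar X : YY X →L[ℂ] YY X))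
      (-resolvent (Sbar X : YY X →L[ℂ] YY X) z ^ 2) z :=
    spectrum.hasDerivAt_resolvent (a := (Sbar X : YY X →L[ℂ] YY X)) (k := z)
      (mem_resolventSet_of_norm_ne_one X hz)
  have h1 : DifferentiableAt ℂ (resolvent (Sbar X : YY X →L[ℂ] YY X)) z :=
    HasDerivAt.differentiableAt (𝕜 := ℂ) (F := YY X →L[ℂ] YY X) h0
  exact ((ContinuousLinearMap.apply ℂ (YY X) (Submodule.Quotient.mk x)).differentiableAt).comp (𝕜 := ℂ) (E := ℂ) (F := YY X →L[ℂ] YY X)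
    (f := resolvent (Sbar X : YY X →L[ℂ] YY X)) z h1

set_option synthInstance.maxHeartbeats 1000000 in
instance : T2Space (YY X) := by infer_instance

lemma eq_of_eventually_agree {w : ℂ} {f g : ℂ → YY X} (hf : ContinuousAt f w)
    (hg : ContinuousAt g w) (hfg : ∀ᶠ z in 𝓝 w, ‖z‖ ≠ 1 → f z = g z) : f w = g w := by
  by_cases hw : ‖w‖ = 1
  · have hulim : Tendsto (fun n : ℕ => ((1 + 1/(n+1) : ℝ) : ℂ) • w) atTop (𝓝 w) := by
      have h0 : Tendsto (fun n : ℕ => (1 + 1/(n+1) : ℝ)) atTop (𝓝 1) := by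
        have := tendsto_one_div_add_atTop_nhds_zero_nat (𝕜 := ℝ)
        simpa using (tendsto_const_nhds (x := (1:ℝ))).add this
      have h1 : Tendsto (fun n : ℕ => ((1 + 1/(n+1) : ℝ) : ℂ)) atTop (𝓝 (1:ℂ)) := by
        have := (Complex.continuous_ofReal.tendsto (1:ℝ)).comp h0
        simpa [Function.comp_def] using this
      simpa using h1.smul_const w
    have hnorm : ∀ n : ℕ, ‖((1 + 1/(n+1) : ℝ) : ℂ) • w‖ ≠ 1 := by
      intro n
      have hpos : (0:ℝ) < 1/(n+1) := by positivity
      have heq : ‖((1 + 1/(n+1) : ℝ) : ℂ) • w‖ = (1 + 1/(n+1)) * ‖w‖ := by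
        simp only [norm_smul, Complex.norm_real, Real.norm_eq_abs]
        rw [abs_of_pos (by linarith)]
      rw [heq, hw, mul_one]
      intro hcon
      linarith
    have hev : (fun n : ℕ => g (((1 + 1/(n+1) : ℝ) : ℂ) • w)) =ᶠ[atTop]
        (fun n : ℕ => f (((1 + 1/(n+1) : ℝ) : ℂ) • w)) := by
      filter_upwards [hulim.eventually hfg] with n hn
      exact (hn (hnorm n)).symm
    have tf : Tendsto (fun n : ℕ => f (((1 + 1/(n+1) : ℝ) : ℂ) • w)) atTop (𝓝 (f w)) :=
      hf.tendsto.comp hulim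
    have tg : Tendsto (fun n : ℕ => g (((1 + 1/(n+1) : ℝ) : ℂ) • w)) atTop (𝓝 (g w)) :=
      hg.tendsto.comp hulim
    exact tendsto_nhds_unique tf (Filter.Tendsto.congr' hev tg)
  · exact hfg.self_of_nhds hw

set_option maxHeartbeats 1000000 in
lemma gfun_tendsto_cobounded (x : Linf X) :
    Tendsto (gfun X x) (Bornology.cobounded ℂ) (𝓝 0) := by
  have h1 := spectrum.resolvent_tendsto_cobounded (𝕜 := ℂ) (a := (Sbar X : YY X →L[ℂ] YY X))
  have h2 := ((ContinuousLinearMap.apply ℂ (YY X)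
      (Submodule.Quotient.mk x)).continuous.tendsto 0).comp h1
  show Tendsto (fun z => (resolvent (Sbar X) z) (Submodule.Quotient.mk x)) _ _
  simpa [gfun, Function.comp_def] using h2

lemma mk_eq_zero_of_gfun_two_eq_zero (x : Linf X) (h2 : gfun X x 2 = 0) :
    (Submodule.Quotient.mk x : YY X) = 0 := by
  have hres : (2:ℂ) ∈ resolventSet ℂ (Sbar X : YY X →L[ℂ] YY X) :=
    mem_resolventSet_of_norm_ne_one X (by norm_num)
  have hunit : IsUnit (algebraMap ℂ (YY X →L[ℂ] YY X) 2 - Sbar X) := hres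
  have hinv : (algebraMap ℂ (YY X →L[ℂ] YY X) 2 - Sbar X) *
      resolvent (Sbar X : YY X →L[ℂ] YY X) (2:ℂ) = 1 := by
    rw [resolvent]
    exact Ring.mul_inverse_cancel _ hunit
  calc (Submodule.Quotient.mk x : YY X)
      = ((algebraMap ℂ (YY X →L[ℂ] YY X) 2 - Sbar X) *
          resolvent (Sbar X : YY X →L[ℂ] YY X) (2:ℂ)) (Submodule.Quotient.mk x) := by
        rw [hinv]; rfl
    _ = (algebraMap ℂ (YY X →L[ℂ] YY X) 2 - Sbar X)
          (resolvent (Sbar X : YY X →L[ℂ] YY X) (2:ℂ) (Submodule.Quotient.mk x)) := rfl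
    _ = (algebraMap ℂ (YY X →L[ℂ] YY X) 2 - Sbar X) 0 := by rw [← h2]; rfl
    _ = 0 := map_zero _

/-- **Theorem 1.** For a bounded sequence `x ∈ ℓ^∞(X)`, the spectrum `σ(x)` is
empty if and only if `lim_{n→∞} x n = 0` in `X`. -/
theorem seqSpectrum_eq_empty_iff (x : Linf X) :
    seqSpectrum X x = ∅ ↔ Tendsto (fun n => x n) atTop (𝓝 (0 : X)) := by
  constructor
  · intro hσ
    have hloc : ∀ z₀ : ℂ, ∃ (U : Set ℂ) (h : ℂ → YY X), IsOpen U ∧ z₀ ∈ U ∧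
        AnalyticOnNhd ℂ h U ∧ ∀ z ∈ U, ‖z‖ ≠ 1 → h z = gfun X x z := by
      intro z₀
      have hz : z₀ ∉ seqSpectrum X x := by rw [hσ]; exact Set.notMem_empty z₀
      simp only [seqSpectrum, Set.mem_setOf_eq, not_not] at hz
      exact hz
    choose U h hUo hUm hAn hAg using hloc
    have key : ∀ z₀ w : ℂ, w ∈ U z₀ → h w w = h z₀ w := by
      intro z₀ w hw
      refine eq_of_eventually_agree X (f := h w) (g := h z₀) ((hAn w w (hUm w)).continuousAt)
        ((hAn z₀ w hw).continuousAt) ?_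
      filter_upwards [((hUo w).inter (hUo z₀)).mem_nhds ⟨hUm w, hw⟩] with z hz hz1
      rw [hAg w z hz.1 hz1, hAg z₀ z hz.2 hz1]
    have heq : ∀ z₀ : ℂ, (fun z => h z z) =ᶠ[𝓝 z₀] h z₀ := by
      intro z₀
      filter_upwards [(hUo z₀).mem_nhds (hUm z₀)] with w hw
      exact key z₀ w hw
    have hdiff : Differentiable ℂ (fun z => h z z) := by
      intro z₀
      exact (Filter.EventuallyEq.differentiableAt_iff (heq z₀)).mpr
        (hAn z₀ z₀ (hUm z₀)).differentiableAt
    have hHg : ∀ z : ℂ, ‖z‖ ≠ 1 → h z z = gfun X x z := fun z hz => hAg z z (hUm z) hz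
    have hcob : Tendsto (fun z => h z z) (Bornology.cobounded ℂ) (𝓝 0) := by
      refine Filter.Tendsto.congr' ?_ (gfun_tendsto_cobounded X x)
      filter_upwards [tendsto_norm_cobounded_atTop.eventually_ge_atTop 2] with z hz
      exact (hHg z (by intro h1; rw [h1] at hz; linarith)).symm
    have hcoc : Tendsto (fun z => h z z) (cocompact ℂ) (𝓝 0) := by
      rwa [Metric.cobounded_eq_cocompact] at hcob
    have hconst := hdiff.eq_const_of_tendsto_cocompact hcoc
    have h22 : h 2 2 = 0 := by
      have := congrFun hconst 2
      simpa using this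
    have h2 : gfun X x 2 = 0 := by
      rw [← hHg 2 (by norm_num)]
      exact h22
    have hmk := mk_eq_zero_of_gfun_two_eq_zero X x h2
    rw [Submodule.Quotient.mk_eq_zero] at hmk
    exact hmk
  · intro hx
    have hmk : (Submodule.Quotient.mk x : YY X) = 0 :=
      (Submodule.Quotient.mk_eq_zero _).mpr hx
    have hg : ∀ z : ℂ, gfun X x z = 0 := by
      intro z
      rw [gfun, hmk, map_zero]
    rw [Set.eq_empty_iff_forall_notMem]
    intro z₀ hz₀
    simp only [seqSpectrum, Set.mem_setOf_eq] at hz₀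
    exact hz₀ ⟨Set.univ, fun _ => 0, isOpen_univ, Set.mem_univ z₀, analyticOnNhd_const,
      fun z _ _ => (hg z).symm⟩
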